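/- Let L₋ be a real quadratic space of signature (2, m) and l ∈ L₋ with q(l) > 0. Given any orthogonal pair (ω₋, γ) in L₋ with q(ω₋) > 0 and q(γ) > 0, there exists a finite sequence of pairs, each obtained from the previous one either by a rotation in the positive definite plane they span, or by replacing γ with another vector γ' such that the plane spanned by ω₋ and γ' is positive definite and ⟨ω₋, γ'⟩ = 0, ending at a pair (ω₋', γ') with γ' = l. -/

import Mathlib

open Module

def PosDefOn {L : Type*} [AddCommGroup L] [Module ℝ L]
    (B : L →ₗ[ℝ] L →ₗ[ℝ] ℝ) (W : Submodule ℝ L) : Prop :=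
  ∀ x ∈ W, x ≠ 0 → 0 < B x x


/-- One elementary move on orthogonal positive pairs `(ω₋, γ)`:
either a rotation in the positive definite plane they span (extended by the
identity on its orthogonal complement), or replacing `γ` by another vector
`γ'` orthogonal to `ω₋` and spanning with it a positive definite plane. -/
def Step {L : Type*} [AddCommGroup L] [Module ℝ L] [FiniteDimensional ℝ L]
    (B : L →ₗ[ℝ] L →ₗ[ℝ] ℝ) (p q : L × L) : Prop :=
  (PosDefOn B (Submodule.span ℝ {p.1, p.2}) ∧
    ∃ R : L ≃ₗ[ℝ] L,
      (∀ x y, B (R x) (R y) = B x y) ∧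
      LinearMap.det (R : L →ₗ[ℝ] L) = 1 ∧
      (∀ x : L, (∀ w ∈ Submodule.span ℝ {p.1, p.2}, B x w = 0) → R x = x) ∧
      (∀ w ∈ Submodule.span ℝ {p.1, p.2}, R w ∈ Submodule.span ℝ {p.1, p.2}) ∧
      q = (R p.1, R p.2)) ∨
  (q.1 = p.1 ∧ B p.1 q.2 = 0 ∧
    PosDefOn B (Submodule.span ℝ {p.1, q.2}) ∧
    finrank ℝ (Submodule.span ℝ {p.1, q.2}) = 2)

section Aux
variable {L : Type*} [AddCommGroup L] [Module ℝ L] [FiniteDimensional ℝ L]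
variable (B : L →ₗ[ℝ] L →ₗ[ℝ] ℝ)

/-- numeric "adjacency": positive vectors spanning a pos def plane -/
def Adj (u z : L) : Prop := 0 < B u u ∧ 0 < B z z ∧ (B u z)^2 < B u u * B z z

lemma indep_of_adj (hsymm : ∀ x y, B x y = B y x) {u z : L} (h : Adj B u z) :
    LinearIndependent ℝ ![u, z] := by
  obtain ⟨hu, hz, hcs⟩ := h
  rw [LinearIndependent.pair_iff]
  intro s t hst
  have h1 : B u (s • u + t • z) = 0 := by rw [hst]; simp
  have h2 : B z (s • u + t • z) = 0 := by rw [hst]; simp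
  simp only [map_add, map_smul, smul_eq_mul] at h1 h2
  rw [hsymm z u] at h2
  have hq : s^2 * B u u + 2*s*t* B u z + t^2 * B z z = 0 := by
    linear_combination s * h1 + t * h2
  have ht2 : t^2 = 0 := by
    have h3 : t^2 * (B u u * B z z - (B u z)^2) ≤ 0 := by
      nlinarith [sq_nonneg (s * B u u + t * B u z)]
    nlinarith [sq_nonneg t]
  have ht : t = 0 := by
    exact pow_eq_zero_iff (by norm_num) |>.mp ht2
  subst ht
  simp only [mul_zero, zero_mul, add_zero, mul_eq_zero] at h1
  rcases h1 with h1 | h1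
  · exact ⟨h1, rfl⟩
  · exact absurd h1 (ne_of_gt hu)

lemma posdef_of_adj (hsymm : ∀ x y, B x y = B y x) {u z : L} (h : Adj B u z) :
    PosDefOn B (Submodule.span ℝ {u, z}) ∧ finrank ℝ (Submodule.span ℝ {u, z}) = 2 := by
  obtain ⟨hu, hz, hcs⟩ := h
  constructor
  · intro x hx hx0
    obtain ⟨s, t, rfl⟩ := Submodule.mem_span_pair.mp hx
    have hst : ¬ (s = 0 ∧ t = 0) := by
      rintro ⟨rfl, rfl⟩; simp at hx0
    simp only [map_add, map_smul, smul_eq_mul, LinearMap.add_apply, LinearMap.smul_apply]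
    rw [hsymm z u]
    rcases eq_or_ne t 0 with rfl | ht
    · have hs : s ≠ 0 := by tauto
      have : 0 < s^2 := by positivity
      nlinarith
    · have : 0 < t^2 := by positivity
      nlinarith [sq_nonneg (s * B u u + t * B u z), mul_pos this (sub_pos.mpr hcs)]
  · have hr : Set.range ![u, z] = {u, z} := by
      simp [Matrix.range_cons, Matrix.range_empty, Set.pair_comm]
    rw [← hr, finrank_span_eq_card (indep_of_adj B hsymm ⟨hu, hz, hcs⟩)]
    simp

lemma adj_of_orth {u z : L} (hu : 0 < B u u)
    (hz : 0 < B z z) (ho : B u z = 0) : Adj B u z := ⟨hu, hz, by nlinarith⟩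

lemma adj_smul_left {u z : L} (h : Adj B u z) {c : ℝ} (hc : c ≠ 0) : Adj B (c • u) z := by
  obtain ⟨hu, hz, hcs⟩ := h
  have hc2 : 0 < c^2 := by positivity
  refine ⟨?_, hz, ?_⟩ <;> simp only [map_smul, smul_eq_mul, LinearMap.smul_apply] <;>
    nlinarith [mul_pos hc2 hu, mul_pos hc2 (sub_pos.mpr hcs)]

end Aux

section Rot
variable {L : Type*} [AddCommGroup L] [Module ℝ L]

noncomputable def rmap (f g : L →ₗ[ℝ] ℝ) (u v : L) (α β δ ε : ℝ) : L →ₗ[ℝ] L :=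
  LinearMap.id + ((α • f + β • g).smulRight u) + ((δ • f + ε • g).smulRight v)

lemma rmap_apply (f g : L →ₗ[ℝ] ℝ) (u v : L) (α β δ ε : ℝ) (x : L) :
    rmap f g u v α β δ ε x = x + (α * f x + β * g x) • u + (δ * f x + ε * g x) • v := by
  simp [rmap]

end Rot

section Rot2
variable {L : Type*} [AddCommGroup L] [Module ℝ L] [FiniteDimensional ℝ L]
variable (B : L →ₗ[ℝ] L →ₗ[ℝ] ℝ)

-- the rotation matrix [[a, -(b V/U)],[b, a]] in plane span{u,v}, extended by id
noncomputable def rot (u v : L) (a b : ℝ) : L →ₗ[ℝ] L :=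
  rmap (B u) (B v) u v ((a-1)/(B u u)) (-b/(B u u)) (b/(B u u)) ((a-1)/(B v v))

lemma rot_comp (hsymm : ∀ x y, B x y = B y x) (u v : L) (hu : 0 < B u u) (hv : 0 < B v v)
    (ho : B u v = 0) (a b : ℝ) (hab : a^2 * B u u + b^2 * B v v = B u u) :
    (rot B u v a (-b)).comp (rot B u v a b) = LinearMap.id := by
  have hvu : B v u = 0 := by rw [hsymm]; exact ho
  have hU := hu.ne'
  have hV := hv.ne'
  ext x
  simp only [LinearMap.comp_apply, LinearMap.id_apply, rot, rmap_apply, map_add, map_smul,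
    smul_eq_mul, ho, hvu, mul_zero, add_zero, zero_add]
  match_scalars
  · ring
  · field_simp
    ring_nf
    linear_combination (B u x) * hab
  · field_simp
    ring_nf
    linear_combination (B v x) * hab

lemma rot_apply_u (hsymm : ∀ x y, B x y = B y x) (u v : L) (hu : B u u ≠ 0) (hv : B v v ≠ 0)
    (ho : B u v = 0) (a b : ℝ) : rot B u v a b u = a • u + b • v := by
  have hvu : B v u = 0 := by rw [hsymm]; exact ho
  simp only [rot, rmap_apply, hvu, ho, mul_zero, add_zero]
  match_scalars <;> field_simp <;> ring

lemma rot_apply_v (hsymm : ∀ x y, B x y = B y x) (u v : L) (hu : B u u ≠ 0) (hv : B v v ≠ 0)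
    (ho : B u v = 0) (a b : ℝ) :
    rot B u v a b v = (-(b * B v v / B u u)) • u + a • v := by
  have hvu : B v u = 0 := by rw [hsymm]; exact ho
  simp only [rot, rmap_apply, hvu, ho, mul_zero, zero_add]
  match_scalars <;> field_simp <;> ring

lemma rot_apply_ker (u v : L) (a b : ℝ) {x : L} (h1 : B u x = 0) (h2 : B v x = 0) :
    rot B u v a b x = x := by
  simp [rot, rmap_apply, h1, h2]

lemma rot_isometry (hsymm : ∀ x y, B x y = B y x) (u v : L) (hu : 0 < B u u) (hv : 0 < B v v)
    (ho : B u v = 0) (a b : ℝ) (hab : a^2 * B u u + b^2 * B v v = B u u) (x y : L) :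
    B (rot B u v a b x) (rot B u v a b y) = B x y := by
  have hvu : B v u = 0 := by rw [hsymm]; exact ho
  have hU := hu.ne'
  have hV := hv.ne'
  simp only [rot, rmap_apply, map_add, map_smul, smul_eq_mul, LinearMap.add_apply,
    LinearMap.smul_apply, ho, hvu, mul_zero, add_zero, zero_add]
  rw [hsymm x u, hsymm x v]
  field_simp
  ring_nf
  linear_combination (B v v * B u x * B u y
    + B u u * B v x * B v y) * hab

lemma det_plane (hsymm : ∀ x y, B x y = B y x) (u v : L) (hu : 0 < B u u) (hv : 0 < B v v)
    (ho : B u v = 0) (hli : LinearIndependent ℝ ![u, v]) (R : L →ₗ[ℝ] L)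
    (a b c d : ℝ)
    (hRu : R u = a • u + b • v) (hRv : R v = c • u + d • v)
    (hK : ∀ x, B u x = 0 → B v x = 0 → R x = x) : LinearMap.det R = a * d - c * b := by
  have hvu : B v u = 0 := by rw [hsymm]; exact ho
  have hU := hu.ne'
  have hV := hv.ne'
  set P := Submodule.span ℝ {u, v} with hP
  have hrange : Set.range ![u, v] = {u, v} := by
    simp [Matrix.range_cons, Matrix.range_empty, Set.pair_comm]
  set K := LinearMap.ker (B u) ⊓ LinearMap.ker (B v) with hK'
  have hmemK : ∀ x : L, x ∈ K ↔ B u x = 0 ∧ B v x = 0 := by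
    intro x; simp [hK', LinearMap.mem_ker]
  have hcompl : IsCompl P K := by
    constructor
    · rw [Submodule.disjoint_def]
      intro x hxP hxK
      obtain ⟨s, t, rfl⟩ := Submodule.mem_span_pair.mp hxP
      obtain ⟨h1, h2⟩ := (hmemK _).mp hxK
      simp only [map_add, map_smul, smul_eq_mul, ho, hvu, mul_zero, add_zero, zero_add] at h1 h2
      have hs : s = 0 := by
        rcases mul_eq_zero.mp h1 with h | h
        · exact h
        · exact absurd h hU
      have ht : t = 0 := by
        rcases mul_eq_zero.mp h2 with h | h
        · exact h
        · exact absurd h hV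
      simp [hs, ht]
    · rw [codisjoint_iff, eq_top_iff]
      intro x _
      rw [Submodule.mem_sup]
      refine ⟨(B u x / B u u) • u + (B v x / B v v) • v, ?_, x - ((B u x / B u u) • u + (B v x / B v v) • v), ?_, by abel⟩
      · exact Submodule.add_mem _ (Submodule.smul_mem _ _ (Submodule.subset_span (by simp)))
          (Submodule.smul_mem _ _ (Submodule.subset_span (by simp)))
      · rw [hmemK]
        constructor <;>
          simp only [map_sub, map_add, map_smul, smul_eq_mul, ho, hvu, mul_zero, add_zero, zero_add] <;>
          field_simp <;> ring
  let bP : Basis (Fin 2) ℝ P := (Basis.span hli).map (LinearEquiv.ofEq _ _ (by rw [hrange]))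
  let bK := Module.finBasis ℝ K
  let e := Submodule.prodEquivOfIsCompl P K hcompl
  let bL := (bP.prod bK).map e
  have hbP : ∀ i : Fin 2, (bL (Sum.inl i) : L) = ![u, v] i := by
    intro i
    simp only [bL, Basis.map_apply, Basis.prod_apply, Sum.elim_inl, Function.comp_apply,
      LinearMap.inl_apply]
    rw [Submodule.coe_prodEquivOfIsCompl']
    simp [bP, Basis.span_apply]
  have hbu : bL (Sum.inl 0) = u := hbP 0
  have hbv : bL (Sum.inl 1) = v := hbP 1
  have hbK : ∀ j, R (bL (Sum.inr j)) = bL (Sum.inr j) := by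
    intro j
    have hmem : (bL (Sum.inr j) : L) ∈ K := by
      simp only [bL, Basis.map_apply, Basis.prod_apply, Sum.elim_inr, Function.comp_apply,
        LinearMap.inr_apply]
      rw [Submodule.coe_prodEquivOfIsCompl']
      simp only [Submodule.coe_zero, zero_add]
      exact (bK j).2
    obtain ⟨h1, h2⟩ := (hmemK _).mp hmem
    exact hK _ h1 h2
  have hM : LinearMap.toMatrix bL bL R =
      Matrix.fromBlocks !![a, c; b, d] 0 0 (1 : Matrix (Fin (finrank ℝ K)) (Fin (finrank ℝ K)) ℝ) := by
    ext i j
    rw [LinearMap.toMatrix_apply]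
    cases j with
    | inl jf =>
      fin_cases jf <;> beta_reduce <;> simp only [Fin.zero_eta, Fin.mk_one]
      · rw [hbu, hRu, ← hbu, ← hbv]
        rw [map_add, map_smul, map_smul, Basis.repr_self, Basis.repr_self]
        cases i with
        | inl i0 => fin_cases i0 <;> simp [Finsupp.single_apply]
        | inr ik => simp [Finsupp.single_apply]
      · rw [hbv, hRv, ← hbu, ← hbv]
        rw [map_add, map_smul, map_smul, Basis.repr_self, Basis.repr_self]
        cases i with
        | inl i0 => fin_cases i0 <;> simp [Finsupp.single_apply]
        | inr ik => simp [Finsupp.single_apply]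
    | inr jk =>
      rw [hbK, Basis.repr_self]
      cases i with
      | inl i0 => fin_cases i0 <;> simp [Finsupp.single_apply]
      | inr ik => simp [Finsupp.single_apply, Matrix.one_apply, eq_comm]
  have := LinearMap.det_toMatrix bL R
  rw [← this, hM, Matrix.det_fromBlocks_zero₂₁, Matrix.det_one, mul_one,
    Matrix.det_fin_two_of]

lemma rot_step (hsymm : ∀ x y, B x y = B y x) (u v : L) (hu : 0 < B u u) (hv : 0 < B v v)
    (ho : B u v = 0) (a b : ℝ) (hab : a^2 * B u u + b^2 * B v v = B u u) :
    Step B (u, v) (a • u + b • v, (-(b * B v v / B u u)) • u + a • v) := by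
  have hU := hu.ne'
  have hV := hv.ne'
  have hab' : a^2 * B u u + (-b)^2 * B v v = B u u := by rw [neg_sq]; exact hab
  have hcomp1 : (rot B u v a b).comp (rot B u v a (-b)) = LinearMap.id := by
    have := rot_comp B hsymm u v hu hv ho a (-b) hab'
    rwa [neg_neg] at this
  have hcomp2 : (rot B u v a (-b)).comp (rot B u v a b) = LinearMap.id :=
    rot_comp B hsymm u v hu hv ho a b hab
  left
  obtain ⟨hpd, _⟩ := posdef_of_adj B hsymm (adj_of_orth B hu hv ho)
  refine ⟨hpd, LinearEquiv.ofLinear (rot B u v a b) (rot B u v a (-b)) hcomp1 hcomp2,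
    fun x y => rot_isometry B hsymm u v hu hv ho a b hab x y, ?_, ?_, ?_, ?_⟩
  · show LinearMap.det (rot B u v a b) = 1
    rw [det_plane B hsymm u v hu hv ho (indep_of_adj B hsymm (adj_of_orth B hu hv ho))
      (rot B u v a b) a b (-(b * B v v / B u u)) a
      (rot_apply_u B hsymm u v hU hV ho a b) (rot_apply_v B hsymm u v hU hV ho a b)
      (fun x h1 h2 => rot_apply_ker B u v a b h1 h2)]
    field_simp
    linear_combination hab
  · intro x hx
    apply rot_apply_ker
    · rw [hsymm]; exact hx u (Submodule.subset_span (by simp))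
    · rw [hsymm]; exact hx v (Submodule.subset_span (by simp))
  · intro w hw
    obtain ⟨s, t, rfl⟩ := Submodule.mem_span_pair.mp hw
    show rot B u v a b (s • u + t • v) ∈ _
    rw [map_add, map_smul, map_smul, rot_apply_u B hsymm u v hU hV ho a b,
      rot_apply_v B hsymm u v hU hV ho a b]
    have hum : u ∈ Submodule.span ℝ ({u, v} : Set L) := Submodule.subset_span (by simp)
    have hvm : v ∈ Submodule.span ℝ ({u, v} : Set L) := Submodule.subset_span (by simp)
    exact Submodule.add_mem _
      (Submodule.smul_mem _ _ (Submodule.add_mem _ (Submodule.smul_mem _ _ hum)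
        (Submodule.smul_mem _ _ hvm)))
      (Submodule.smul_mem _ _ (Submodule.add_mem _ (Submodule.smul_mem _ _ hum)
        (Submodule.smul_mem _ _ hvm)))
  · show _ = (rot B u v a b u, rot B u v a b v)
    rw [rot_apply_u B hsymm u v hU hV ho a b, rot_apply_v B hsymm u v hU hV ho a b]

end Rot2
section Reach
variable {L : Type*} [AddCommGroup L] [Module ℝ L] [FiniteDimensional ℝ L]
variable (B : L →ₗ[ℝ] L →ₗ[ℝ] ℝ)

lemma reach (hsymm : ∀ x y, B x y = B y x) (u γ z : L) (hu : 0 < B u u) (hγ : 0 < B γ γ)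
    (ho : B u γ = 0) (hz : Adj B u z) :
    ∃ c : ℝ, c ≠ 0 ∧ ∃ γ' : L, 0 < B (c • z) (c • z) ∧ 0 < B γ' γ' ∧ B (c • z) γ' = 0 ∧
      Relation.ReflTransGen (Step B) (u, γ) (c • z, γ') := by
  obtain ⟨_, hzz, hcs⟩ := hz
  have hU := hu.ne'
  have hZ := hzz.ne'
  set d : ℝ := B u z / B u u with hd
  set γ₁ : L := z - d • u with hγ₁
  have huγ₁ : B u γ₁ = 0 := by
    simp only [hγ₁, map_sub, map_smul, smul_eq_mul, hd]
    field_simp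
    ring
  have hγ₁u : B γ₁ u = 0 := by rw [hsymm]; exact huγ₁
  have hγ₁γ₁ : B γ₁ γ₁ = B z z - (B u z)^2 / B u u := by
    simp only [hγ₁, map_sub, map_smul, LinearMap.sub_apply, LinearMap.smul_apply,
      smul_eq_mul, hd, hsymm z u]
    field_simp
    ring
  have hγ₁pos : 0 < B γ₁ γ₁ := by
    rw [hγ₁γ₁]
    have : (B u z)^2 / B u u < B z z := (div_lt_iff₀ hu).mpr (by nlinarith)
    linarith
  have step1 : Step B (u, γ) (u, γ₁) :=
    Or.inr ⟨rfl, huγ₁, (posdef_of_adj B hsymm (adj_of_orth B hu hγ₁pos huγ₁)).1,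
      (posdef_of_adj B hsymm (adj_of_orth B hu hγ₁pos huγ₁)).2⟩
  set c : ℝ := Real.sqrt (B u u / B z z) with hc
  have hcpos : 0 < c := Real.sqrt_pos.mpr (by positivity)
  have hc2 : c^2 = B u u / B z z := Real.sq_sqrt (by positivity)
  set a : ℝ := c * B u z / B u u with ha
  have hc2' : c^2 * B z z = B u u := by
    rw [hc2]; field_simp
  have hab : a^2 * B u u + c^2 * B γ₁ γ₁ = B u u := by
    rw [hγ₁γ₁, ha]
    field_simp
    linear_combination (B u u) * hc2'
  have step2 := rot_step B hsymm u γ₁ hu hγ₁pos huγ₁ a c hab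
  have hkey : a • u + c • γ₁ = c • z := by
    rw [hγ₁, ha, hd]
    match_scalars
    · field_simp
      ring
    · ring
  rw [hkey] at step2
  refine ⟨c, hcpos.ne', (-(c * B γ₁ γ₁ / B u u)) • u + a • γ₁, ?_, ?_, ?_, ?_⟩
  · rw [← hkey]
    rw [show a • u + c • γ₁ = rot B u γ₁ a c u from (rot_apply_u B hsymm u γ₁ hU hγ₁pos.ne' huγ₁ a c).symm]
    rw [rot_isometry B hsymm u γ₁ hu hγ₁pos huγ₁ a c hab]
    exact hu
  · rw [show (-(c * B γ₁ γ₁ / B u u)) • u + a • γ₁ = rot B u γ₁ a c γ₁ from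
      (rot_apply_v B hsymm u γ₁ hU hγ₁pos.ne' huγ₁ a c).symm]
    rw [rot_isometry B hsymm u γ₁ hu hγ₁pos huγ₁ a c hab]
    exact hγ₁pos
  · rw [← hkey,
      show a • u + c • γ₁ = rot B u γ₁ a c u from (rot_apply_u B hsymm u γ₁ hU hγ₁pos.ne' huγ₁ a c).symm,
      show (-(c * B γ₁ γ₁ / B u u)) • u + a • γ₁ = rot B u γ₁ a c γ₁ from
        (rot_apply_v B hsymm u γ₁ hU hγ₁pos.ne' huγ₁ a c).symm,
      rot_isometry B hsymm u γ₁ hu hγ₁pos huγ₁ a c hab]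
    exact huγ₁
  · exact Relation.ReflTransGen.tail (Relation.ReflTransGen.single step1) step2

end Reach
set_option maxHeartbeats 1000000 in
theorem stmt19 (L : Type*) [AddCommGroup L] [Module ℝ L] [FiniteDimensional ℝ L]
    (B : L →ₗ[ℝ] L →ₗ[ℝ] ℝ)
    (hsymm : ∀ x y, B x y = B y x)
    (hnd : ∀ x, (∀ y, B x y = 0) → x = 0)
    (hpos2 : ∃ W : Submodule ℝ L, PosDefOn B W ∧ finrank ℝ W = 2)
    (hmax2 : ∀ W : Submodule ℝ L, PosDefOn B W → finrank ℝ W ≤ 2)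
    (l : L) (hl : 0 < B l l)
    (ω γ : L) (horth : B ω γ = 0) (hω : 0 < B ω ω) (hγ : 0 < B γ γ) :
    ∃ ω' : L, Relation.ReflTransGen (Step B) (ω, γ) (ω', l) := by
  classical
  obtain ⟨W, hWpd, hWrk⟩ := hpos2
  -- an orthogonal positive basis of W
  have hbasis : ∃ E₁ E₂ : L, 0 < B E₁ E₁ ∧ 0 < B E₂ E₂ ∧ B E₁ E₂ = 0 := by
    set b := finBasisOfFinrankEq ℝ W hWrk with hb
    set E₁ : L := (b 0 : L) with hE₁
    set x₂ : L := (b 1 : L) with hx₂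
    have hE₁mem : E₁ ∈ W := (b 0).2
    have hx₂mem : x₂ ∈ W := (b 1).2
    have hE₁ne : E₁ ≠ 0 := by
      simpa [hE₁, Submodule.coe_eq_zero] using b.ne_zero 0
    have hE₁pos : 0 < B E₁ E₁ := hWpd E₁ hE₁mem hE₁ne
    set dd : ℝ := B E₁ x₂ / B E₁ E₁ with hdd
    set E₂ : L := x₂ - dd • E₁ with hE₂
    have hE₂mem : E₂ ∈ W := Submodule.sub_mem _ hx₂mem (Submodule.smul_mem _ _ hE₁mem)
    have hE₂ne : E₂ ≠ 0 := by
      intro h0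
      rw [hE₂] at h0
      have hxe : x₂ = dd • E₁ := sub_eq_zero.mp h0
      have hcoe : (b 1 : L) = ((dd • b 0 : W) : L) := by
        rw [Submodule.coe_smul, ← hx₂, ← hE₁]; exact hxe
      have hsub : b 1 = dd • b 0 := Subtype.coe_injective hcoe
      have hli := b.linearIndependent
      rw [Fintype.linearIndependent_iff] at hli
      have := hli (fun i => if i = 0 then -dd else 1)
        (by rw [Fin.sum_univ_two]; simp [hsub]) 1
      simp at this
    have hE₂pos : 0 < B E₂ E₂ := hWpd E₂ hE₂mem hE₂ne
    have h12 : B E₁ E₂ = 0 := by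
      simp only [hE₂, map_sub, map_smul, smul_eq_mul, hdd]
      field_simp
      ring
    exact ⟨E₁, E₂, hE₁pos, hE₂pos, h12⟩
  obtain ⟨E₁, E₂, hE₁pos, hE₂pos, h12⟩ := hbasis
  have adj12 : Adj B E₁ E₂ := adj_of_orth B hE₁pos hE₂pos h12
  have hpdW : PosDefOn B (Submodule.span ℝ {E₁, E₂}) := (posdef_of_adj B hsymm adj12).1
  -- anything orthogonal to E₁, E₂ is nonpositive
  have negOrtho : ∀ x : L, B E₁ x = 0 → B E₂ x = 0 → B x x ≤ 0 := by
    intro x h1 h2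
    by_contra hpos
    push_neg at hpos
    have hxne : x ≠ 0 := by rintro rfl; simp at hpos
    have h1' : B x E₁ = 0 := by rw [hsymm]; exact h1
    have h2' : B x E₂ = 0 := by rw [hsymm]; exact h2
    have h21 : B E₂ E₁ = 0 := by rw [hsymm]; exact h12
    have hli3 : LinearIndependent ℝ ![E₁, E₂, x] := by
      rw [Fintype.linearIndependent_iff]
      intro g hg
      rw [Fin.sum_univ_three] at hg
      simp only [Matrix.cons_val_zero, Matrix.cons_val_one, Matrix.head_cons,
        Matrix.cons_val_two, Matrix.tail_cons] at hg
      have e1 : B E₁ (g 0 • E₁ + g 1 • E₂ + g 2 • x) = 0 := by rw [hg]; simp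
      have e2 : B E₂ (g 0 • E₁ + g 1 • E₂ + g 2 • x) = 0 := by rw [hg]; simp
      have e3 : B x (g 0 • E₁ + g 1 • E₂ + g 2 • x) = 0 := by rw [hg]; simp
      simp only [map_add, map_smul, smul_eq_mul, h12, h21, h1, h2, h1', h2',
        mul_zero, add_zero, zero_add] at e1 e2 e3
      have hg0 : g 0 = 0 := by
        rcases mul_eq_zero.mp e1 with h | h
        · exact h
        · exact absurd h hE₁pos.ne'
      have hg1 : g 1 = 0 := by
        rcases mul_eq_zero.mp e2 with h | h
        · exact h
        · exact absurd h hE₂pos.ne'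
      have hg2 : g 2 = 0 := by
        rcases mul_eq_zero.mp e3 with h | h
        · exact h
        · exact absurd h hpos.ne'
      intro i
      fin_cases i <;> assumption
    have hpd3 : PosDefOn B (Submodule.span ℝ {E₁, E₂, x}) := by
      intro y hy hyne
      rw [show ({E₁, E₂, x} : Set L) = insert E₁ {E₂, x} from rfl,
        Submodule.mem_span_insert] at hy
      obtain ⟨r, z, hz, rfl⟩ := hy
      obtain ⟨s, t, rfl⟩ := Submodule.mem_span_pair.mp hz
      have hexp : B (r • E₁ + (s • E₂ + t • x)) (r • E₁ + (s • E₂ + t • x)) =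
          r^2 * B E₁ E₁ + s^2 * B E₂ E₂ + t^2 * B x x := by
        simp only [map_add, map_smul, smul_eq_mul, LinearMap.add_apply, LinearMap.smul_apply,
          h12, h21, h1, h2, h1', h2', mul_zero, add_zero, zero_add]
        ring
      rw [hexp]
      have hnz : ¬ (r = 0 ∧ s = 0 ∧ t = 0) := by
        rintro ⟨rfl, rfl, rfl⟩; simp at hyne
      rcases not_and_or.mp hnz with hr | hst
      · have : 0 < r^2 := by positivity
        nlinarith [sq_nonneg s, sq_nonneg t]
      · rcases not_and_or.mp hst with hs | ht
        · have : 0 < s^2 := by positivity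
          nlinarith [sq_nonneg r, sq_nonneg t]
        · have : 0 < t^2 := by positivity
          nlinarith [sq_nonneg r, sq_nonneg s]
    have hrk3 : finrank ℝ (Submodule.span ℝ ({E₁, E₂, x} : Set L)) = 3 := by
      have hr : Set.range ![E₁, E₂, x] = {E₁, E₂, x} := by
        ext y
        simp [Matrix.range_cons, Matrix.range_empty]
        tauto
      rw [← hr, finrank_span_eq_card hli3]
      simp
    have := hmax2 _ hpd3
    omega
  -- the positive vector in the plane orthogonal to a given positive vector
  have mkOrth : ∀ y : L, 0 < B y y →
      ∃ u : L, B y u = 0 ∧ 0 < B u u ∧ u ∈ Submodule.span ℝ ({E₁, E₂} : Set L) := by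
    intro y hy
    have humem : (B y E₂) • E₁ - (B y E₁) • E₂ ∈ Submodule.span ℝ ({E₁, E₂} : Set L) :=
      Submodule.sub_mem _
        (Submodule.smul_mem _ _ (Submodule.subset_span (by simp)))
        (Submodule.smul_mem _ _ (Submodule.subset_span (by simp)))
    have hune : (B y E₂) • E₁ - (B y E₁) • E₂ ≠ 0 := by
      intro h0
      have hpair := (LinearIndependent.pair_iff.mp (indep_of_adj B hsymm adj12))
        (B y E₂) (-(B y E₁)) (by rw [neg_smul, ← sub_eq_add_neg]; exact h0)
      have hyE₁ : B y E₁ = 0 := by have := hpair.2; linarith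
      have hyE₂ : B y E₂ = 0 := hpair.1
      have := negOrtho y (by rw [hsymm]; exact hyE₁) (by rw [hsymm]; exact hyE₂)
      linarith
    refine ⟨(B y E₂) • E₁ - (B y E₁) • E₂, ?_, hpdW _ humem hune, humem⟩
    simp only [map_sub, map_smul, smul_eq_mul]
    ring
  obtain ⟨u₁, hωu₁, hu₁pos, hu₁mem⟩ := mkOrth ω hω
  obtain ⟨w, hlw, hwpos, hwmem⟩ := mkOrth l hl
  have hwl : B w l = 0 := by rw [hsymm]; exact hlw
  have adjωu₁ : Adj B ω u₁ := adj_of_orth B hω hu₁pos hωu₁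
  by_cases hx : (B w w) • u₁ - (B u₁ w) • w = 0
  · -- u₁ is already orthogonal to l
    have hu₁l : B u₁ l = 0 := by
      have h0 : B ((B w w) • u₁ - (B u₁ w) • w) l = 0 := by rw [hx]; simp
      simp only [map_sub, map_smul, LinearMap.sub_apply, LinearMap.smul_apply,
        smul_eq_mul, hwl, mul_zero, sub_zero] at h0
      rcases mul_eq_zero.mp h0 with h | h
      · exact absurd h hwpos.ne'
      · exact h
    obtain ⟨c, hc, γ', hczz, hγ', horth', hrtg⟩ := reach B hsymm ω γ u₁ hω hγ horth adjωu₁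
    have horthl : B (c • u₁) l = 0 := by
      simp only [map_smul, LinearMap.smul_apply, smul_eq_mul, hu₁l, mul_zero]
    have final : Step B (c • u₁, γ') (c • u₁, l) := by
      obtain ⟨hpd, hrk⟩ := posdef_of_adj B hsymm (adj_of_orth B hczz hl horthl)
      exact Or.inr ⟨rfl, horthl, hpd, hrk⟩
    exact ⟨c • u₁, hrtg.tail final⟩
  · -- generic case: go through w
    have hxmem : (B w w) • u₁ - (B u₁ w) • w ∈ Submodule.span ℝ ({E₁, E₂} : Set L) :=
      Submodule.sub_mem _ (Submodule.smul_mem _ _ hu₁mem) (Submodule.smul_mem _ _ hwmem)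
    have hxpos : 0 < B ((B w w) • u₁ - (B u₁ w) • w) ((B w w) • u₁ - (B u₁ w) • w) :=
      hpdW _ hxmem hx
    have hexp : B ((B w w) • u₁ - (B u₁ w) • w) ((B w w) • u₁ - (B u₁ w) • w) =
        B w w * (B u₁ u₁ * B w w - (B u₁ w)^2) := by
      simp only [map_sub, map_smul, LinearMap.sub_apply, LinearMap.smul_apply, smul_eq_mul,
        hsymm w u₁]
      ring
    have hadj : Adj B u₁ w := by
      refine ⟨hu₁pos, hwpos, ?_⟩
      rw [hexp] at hxpos
      nlinarith
    obtain ⟨c, hc, γ', hczz, hγ', horth', hrtg⟩ := reach B hsymm ω γ u₁ hω hγ horth adjωu₁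
    have hadj2 : Adj B (c • u₁) w := adj_smul_left B hadj hc
    obtain ⟨c₂, hc₂, γ₂, hcz2, hγ₂, horth₂, hrtg₂⟩ :=
      reach B hsymm (c • u₁) γ' w hczz hγ' horth' hadj2
    have horthl : B (c₂ • w) l = 0 := by
      simp only [map_smul, LinearMap.smul_apply, smul_eq_mul, hwl, mul_zero]
    have final : Step B (c₂ • w, γ₂) (c₂ • w, l) := by
      obtain ⟨hpd, hrk⟩ := posdef_of_adj B hsymm (adj_of_orth B hcz2 hl horthl)
      exact Or.inr ⟨rfl, horthl, hpd, hrk⟩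
    exact ⟨c₂ • w, (hrtg.trans hrtg₂).tail final⟩
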